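/- The 2-stack-sortable number 2·(3n)!/((2n+1)!·(n+1)!) equals ∏_{i=3}^{n+1} (3n+3-i)/i for all n ≥ 1. -/

import Mathlib

open Finset

lemma fac_prod (a : ℕ) : ∀ b, a ≤ b → a.factorial * ∏ j ∈ Icc (a+1) b, j = b.factorial := by
  intro b
  induction b with
  | zero => intro h; interval_cases a; simp
  | succ b ih =>
    intro h
    rcases Nat.lt_or_ge a (b+1) with h' | h'
    · have hab : a ≤ b := Nat.lt_succ_iff.mp h'
      rw [Finset.prod_Icc_succ_top (by omega), ← mul_assoc, ih hab, Nat.factorial_succ,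
        mul_comm]
    · have : a = b + 1 := le_antisymm h h'
      subst this; simp

theorem stmt_3 (n : ℕ) (hn : 1 ≤ n) :
    (2 * Nat.factorial (3 * n) : ℚ) /
        (Nat.factorial (2 * n + 1) * Nat.factorial (n + 1)) =
      ∏ i ∈ Finset.Icc 3 (n + 1), ((3 * n + 3 - i : ℚ) / (i : ℚ)) := by
  have hA : (2 : ℕ) * ∏ i ∈ Icc 3 (n+1), i = (n+1).factorial := by
    have := fac_prod 2 (n+1) (by omega)
    simpa using this
  have hB : (2*n+1).factorial * ∏ j ∈ Icc (2*n+2) (3*n), j = (3*n).factorial := by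
    have := fac_prod (2*n+1) (3*n) (by omega)
    simpa [show 2*n+1+1 = 2*n+2 from rfl] using this
  rw [Finset.prod_div_distrib]
  have hre : ∏ i ∈ Icc 3 (n+1), ((3 * n + 3 - i : ℚ)) =
      ∏ j ∈ Icc (2*n+2) (3*n), (j : ℚ) := by
    refine Finset.prod_nbij' (fun i => 3*n+3-i) (fun j => 3*n+3-j) ?_ ?_ ?_ ?_ ?_
    · intro i hi; simp only [Finset.mem_Icc] at *; omega
    · intro j hj; simp only [Finset.mem_Icc] at *; omega
    · intro i hi; simp only [Finset.mem_Icc] at hi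
      show 3*n+3-(3*n+3-i) = i; omega
    · intro j hj; simp only [Finset.mem_Icc] at hj
      show 3*n+3-(3*n+3-j) = j; omega
    · intro i hi
      simp only [Finset.mem_Icc] at hi
      have : ((3*n+3-i : ℕ) : ℚ) = 3*n+3-(i:ℚ) := by
        push_cast [Nat.cast_sub (by omega : i ≤ 3*n+3)]; ring
      rw [this]
  rw [hre]
  have hBq : ∏ j ∈ Icc (2*n+2) (3*n), (j : ℚ) =
      ((3*n).factorial : ℚ) / ((2*n+1).factorial : ℚ) := by
    rw [eq_div_iff (by positivity), mul_comm]
    have := congrArg (Nat.cast (R := ℚ)) hB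
    push_cast at this
    exact this
  have hAq : ∏ i ∈ Icc 3 (n+1), (i : ℚ) = ((n+1).factorial : ℚ) / 2 := by
    rw [eq_div_iff (by norm_num), mul_comm]
    have := congrArg (Nat.cast (R := ℚ)) hA
    push_cast at this
    exact this
  rw [hBq, hAq]
  have h1 : ((3*n).factorial : ℚ) ≠ 0 := by positivity
  have h2 : ((2*n+1).factorial : ℚ) ≠ 0 := by positivity
  have h3 : ((n+1).factorial : ℚ) ≠ 0 := by positivity
  field_simp
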